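/- (Opposite gain property for OLF) Let S and S' be two OLF systems on the same odd number n of actors with the same vertex set, where in S actor i is an opinion leader or independent actor, actor j is an independent actor, and E(G') = E(G) ∪ {(i,j)}. Then SAT_{S'}(i) - SAT_S(i) = SAT_S(j) - SAT_{S'}(j). -/
import Mathlib


open Finset

/-- The set of predecessors of `i` in the digraph with edge set `E`. -/
def preds {n : ℕ} (E : Finset (Fin n × Fin n)) (i : Fin n) : Finset (Fin n) :=
  Finset.univ.filter (fun j => (j, i) ∈ E)

/-- The set of successors of `i` in the digraph with edge set `E`. -/
def succs {n : ℕ} (E : Finset (Fin n × Fin n)) (i : Fin n) : Finset (Fin n) :=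
  Finset.univ.filter (fun j => (i, j) ∈ E)

/-- `E` is the edge set of an OLF system: every edge runs from a vertex with no
predecessors (an opinion leader) to a vertex with no successors (a follower). -/
def IsOLF {n : ℕ} (E : Finset (Fin n × Fin n)) : Prop :=
  ∀ e ∈ E, preds E e.1 = ∅ ∧ succs E e.2 = ∅

/-- One step of the unanimity rule: actor `i` adopts the common decision of its
predecessors (as recorded in `c`) if they are nonempty and unanimous, and keeps
its own initial decision `x i` otherwise. -/
def unanStep {n : ℕ} (E : Finset (Fin n × Fin n)) (x c : Fin n → Bool) (i : Fin n) : Bool :=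
  if (preds E i).Nonempty ∧ ∀ j ∈ preds E i, c j = true then true
  else if (preds E i).Nonempty ∧ ∀ j ∈ preds E i, c j = false then false
  else x i

/-- The collective decision vector of an OLF system. -/
def olfVec {n : ℕ} (E : Finset (Fin n × Fin n)) (x : Fin n → Bool) : Fin n → Bool :=
  unanStep E x x

/-- Simple majority over a decision vector. -/
def majority {n : ℕ} (c : Fin n → Bool) : Bool :=
  decide ((Finset.univ.filter (fun i => c i = true)).card >
          (Finset.univ.filter (fun i => c i = false)).card)

/-- The collective decision function of an OLF system. -/
def olfC {n : ℕ} (E : Finset (Fin n × Fin n)) (x : Fin n → Bool) : Bool :=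
  majority (olfVec E x)

/-- The satisfaction score of actor `i` under a collective decision making model `C`. -/
def SAT {n : ℕ} (C : (Fin n → Bool) → Bool) (i : Fin n) : ℕ :=
  (Finset.univ.filter (fun x : Fin n → Bool => C x = x i)).card

/-- Opposite gain property for OLF systems: if `i` is an opinion leader or
independent actor, `j` is an independent actor, and the second system is
obtained by adding the edge `(i, j)`, then the gain of `i` equals the loss of `j`. -/
theorem olf_opposite_gain (n : ℕ) (hn : Odd n) (E : Finset (Fin n × Fin n)) (hE : IsOLF E)
    (i j : Fin n) (hij : i ≠ j)
    (hi : preds E i = ∅)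
    (hjP : preds E j = ∅) (hjS : succs E j = ∅)
    (hE' : IsOLF (insert (i, j) E)) :
    (SAT (olfC (insert (i, j) E)) i : ℤ) - SAT (olfC E) i =
      (SAT (olfC E) j : ℤ) - SAT (olfC (insert (i, j) E)) j := by

  have hS : ∀ (C : (Fin n → Bool) → Bool) (k : Fin n),
      (SAT C k : ℤ) = ∑ x : Fin n → Bool, (if C x = x k then (1:ℤ) else 0) := by
    intro C k
    rw [SAT, Finset.card_filter]
    push_cast
    rfl
  have hpne : ∀ k : Fin n, k ≠ j → preds (insert (i, j) E) k = preds E k := by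
    intro k hk
    ext a
    simp [preds, Prod.ext_iff, hk]
  have hpj : preds (insert (i, j) E) j = {i} := by
    ext a
    simp only [preds, Finset.mem_filter, Finset.mem_univ, true_and, Finset.mem_insert,
      Prod.ext_iff, Finset.mem_singleton]
    constructor
    · rintro (⟨h1, h2⟩ | h)
      · exact h1
      · exfalso
        have := hjP
        rw [Finset.eq_empty_iff_forall_notMem] at this
        exact this a (by simp [preds, h])
    · rintro rfl; exact Or.inl ⟨rfl, trivial⟩
  have hvj : ∀ x : Fin n → Bool, olfVec E x j = x j := by
    intro x
    simp [olfVec, unanStep, hjP]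
  have hv'j : ∀ x : Fin n → Bool, olfVec (insert (i, j) E) x j = x i := by
    intro x
    simp only [olfVec, unanStep, hpj, Finset.singleton_nonempty, true_and,
      Finset.mem_singleton, forall_eq]
    cases x i <;> simp
  have hvk : ∀ (x : Fin n → Bool) (k : Fin n), k ≠ j →
      olfVec (insert (i, j) E) x k = olfVec E x k := by
    intro x k hk
    simp [olfVec, unanStep, hpne k hk]
  have hkey : ∀ x : Fin n → Bool, x i = x j →
      olfC (insert (i, j) E) x = olfC E x := by
    intro x h
    unfold olfC
    congr 1
    funext k
    by_cases hk : k = j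
    · subst hk; rw [hv'j, hvj, h]
    · exact hvk x k hk
  rw [hS, hS, hS, hS, ← Finset.sum_sub_distrib, ← Finset.sum_sub_distrib]
  apply Finset.sum_congr rfl
  intro x _
  by_cases h : x i = x j
  · rw [hkey x h, h]
  · cases hc : olfC E x <;> cases hc' : olfC (insert (i, j) E) x <;>
      cases hxi : x i <;> cases hxj : x j <;> simp_all
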